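/- Let Ω ⊆ ℂ^h be a convex open set and let ψ, α_1, …, α_h : Ω → ℂ be holomorphic functions. Define ω : Ω → ℂ^{2h+2} by ω(z) = ψ(z)·e_0 + Σ_{i=1}^h α_i(z)·e_i + Σ_{i=1}^h z_i·f_i + f_0. Then ⟨ω(z), (∂ω/∂z_j)(z)⟩ = 0 for every z ∈ Ω and every j ∈ {1,…,h} if and only if there exists a holomorphic function φ : Ω → ℂ such that α_i(z) = (1/2)·(∂φ/∂z_i)(z) for all i and ψ(z) = φ(z) − (1/2)·Σ_{i=1}^h z_i·(∂φ/∂z_i)(z) for all z ∈ Ω. -/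

import Mathlib

/-- The symplectic form on `ℂ^{2h+2}`, where a vector is recorded as the pair of its
`e_0, e_1, …, e_h`-coordinates and its `f_0, f_1, …, f_h`-coordinates:
`⟨e_i, e_j⟩ = ⟨f_i, f_j⟩ = 0` and `⟨e_i, f_j⟩ = δ_{ij}`. -/
noncomputable def symp {h : ℕ} (x y : (Fin (h+1) → ℂ) × (Fin (h+1) → ℂ)) : ℂ :=
  ∑ j, (x.1 j * y.2 j - x.2 j * y.1 j)

/-- `ω(z) = ψ(z)·e_0 + Σᵢ α_i(z)·e_i + Σᵢ z_i·f_i + f_0`. -/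
noncomputable def omg {h : ℕ} (ψ : (Fin h → ℂ) → ℂ) (α : Fin h → (Fin h → ℂ) → ℂ)
    (z : Fin h → ℂ) : (Fin (h+1) → ℂ) × (Fin (h+1) → ℂ) :=
  (Fin.cons (ψ z) (fun i => α i z), Fin.cons 1 z)

open ContinuousLinearMap in
/-- derivative of `z ↦ ∑ i, z i * β i z` in direction `e_j`. -/
lemma sumprod_fderiv {h : ℕ} (β : Fin h → (Fin h → ℂ) → ℂ) (z : Fin h → ℂ)
    (hβ : ∀ i, DifferentiableAt ℂ (β i) z) (j : Fin h) :
    fderiv ℂ (fun z : Fin h → ℂ => ∑ i, z i * β i z) z (Pi.single j 1) =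
      β j z + ∑ i, z i * fderiv ℂ (β i) z (Pi.single j 1) := by
  have H : HasFDerivAt (fun z : Fin h → ℂ => ∑ i, z i * β i z)
      (∑ i, (z i • fderiv ℂ (β i) z + β i z • (proj i : (Fin h → ℂ) →L[ℂ] ℂ))) z := by
    refine HasFDerivAt.fun_sum fun i _ => ?_
    exact ((hasFDerivAt_apply i z)).mul ((hβ i).hasFDerivAt)
  rw [H.fderiv]
  simp [ContinuousLinearMap.sum_apply, Pi.single_apply, mul_ite, Finset.sum_add_distrib,
    mul_comm, add_comm]

open ContinuousLinearMap in
lemma omg_hasFDerivAt {h : ℕ} (ψ : (Fin h → ℂ) → ℂ) (α : Fin h → (Fin h → ℂ) → ℂ)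
    (z : Fin h → ℂ) (hψ : DifferentiableAt ℂ ψ z) (hα : ∀ i, DifferentiableAt ℂ (α i) z) :
    HasFDerivAt (omg ψ α)
      ((ContinuousLinearMap.pi
          (Fin.cons (fderiv ℂ ψ z) (fun i => fderiv ℂ (α i) z))).prod
        (ContinuousLinearMap.pi
          (Fin.cons 0 (fun i => (proj i : (Fin h → ℂ) →L[ℂ] ℂ))))) z := by
  apply HasFDerivAt.prodMk
  · have e : (fun z => (Fin.cons (ψ z) (fun i => α i z) : Fin (h+1) → ℂ)) =
        fun z i => (Fin.cons ψ (fun i => α i) : Fin (h+1) → (Fin h → ℂ) → ℂ) i z := by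
      funext z i
      induction i using Fin.cases <;> simp
    rw [e]
    apply hasFDerivAt_pi.2
    intro i
    induction i using Fin.cases with
    | zero => simpa using hψ.hasFDerivAt
    | succ i => simpa using (hα i).hasFDerivAt
  · have e : (fun z : Fin h → ℂ => (Fin.cons 1 z : Fin (h+1) → ℂ)) =
        fun z i => (Fin.cons (fun _ => 1) (fun i z => z i) :
          Fin (h+1) → (Fin h → ℂ) → ℂ) i z := by
      funext z i
      induction i using Fin.cases <;> simp [Pi.one_apply]
    have H2 : HasFDerivAt (fun z (i : Fin (h+1)) =>
        (Fin.cons (fun _ => 1) (fun i z => z i) : Fin (h+1) → (Fin h → ℂ) → ℂ) i z)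
        (ContinuousLinearMap.pi
          (Fin.cons 0 (fun i => (proj i : (Fin h → ℂ) →L[ℂ] ℂ)))) z := by
      apply hasFDerivAt_pi.2
      intro i
      induction i using Fin.cases with
      | zero => simpa using hasFDerivAt_const (1:ℂ) z
      | succ i => simpa using hasFDerivAt_apply i z
    exact H2.congr_of_eventuallyEq (Filter.Eventually.of_forall fun w =>
      congrFun e w)

open ContinuousLinearMap in
lemma symp_omg {h : ℕ} (ψ : (Fin h → ℂ) → ℂ) (α : Fin h → (Fin h → ℂ) → ℂ)
    (z : Fin h → ℂ) (hψ : DifferentiableAt ℂ ψ z) (hα : ∀ i, DifferentiableAt ℂ (α i) z)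
    (j : Fin h) :
    symp (omg ψ α z) (fderiv ℂ (omg ψ α) z (Pi.single j 1)) =
      α j z - fderiv ℂ ψ z (Pi.single j 1) - ∑ i, z i * fderiv ℂ (α i) z (Pi.single j 1) := by
  rw [(omg_hasFDerivAt ψ α z hψ hα).fderiv]
  simp only [symp, omg, Fin.sum_univ_succ, ContinuousLinearMap.prod_apply,
    ContinuousLinearMap.pi_apply, Fin.cons_zero, Fin.cons_succ,
    ContinuousLinearMap.zero_apply, ContinuousLinearMap.proj_apply]
  have : ∑ i : Fin h, (α i z * (Pi.single j 1 : Fin h → ℂ) i - z i * fderiv ℂ (α i) z (Pi.single j 1)) =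
      α j z - ∑ i, z i * fderiv ℂ (α i) z (Pi.single j 1) := by
    rw [Finset.sum_sub_distrib]
    congr 1
    simp [Pi.single_apply, mul_ite, Finset.sum_ite_eq]
  rw [this]; ring

lemma phi_fderiv {h : ℕ} (ψ : (Fin h → ℂ) → ℂ) (α : Fin h → (Fin h → ℂ) → ℂ)
    (z : Fin h → ℂ) (hψ : DifferentiableAt ℂ ψ z) (hα : ∀ i, DifferentiableAt ℂ (α i) z)
    (j : Fin h) :
    fderiv ℂ (fun z => ψ z + ∑ i, z i * α i z) z (Pi.single j 1) =
      fderiv ℂ ψ z (Pi.single j 1) + α j z + ∑ i, z i * fderiv ℂ (α i) z (Pi.single j 1) := by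
  have hs : DifferentiableAt ℂ (fun z : Fin h → ℂ => ∑ i, z i * α i z) z :=
    DifferentiableAt.fun_sum fun i _ => ((hasFDerivAt_apply i z).differentiableAt).mul (hα i)
  rw [fderiv_fun_add hψ hs, ContinuousLinearMap.add_apply, sumprod_fderiv α z hα j]
  ring


/-- Griffiths transversality `⟨ω, ∂ω/∂z_j⟩ = 0` holds on a convex open set `Ω` if and
only if there is a holomorphic potential `φ` with `α_i = ½ ∂φ/∂z_i` and
`ψ = φ − ½ Σᵢ z_i ∂φ/∂z_i`. -/
theorem stmt0 {h : ℕ} (hh : 1 ≤ h) (Ω : Set (Fin h → ℂ)) (hΩ : IsOpen Ω)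
    (hconv : Convex ℝ Ω)
    (ψ : (Fin h → ℂ) → ℂ) (α : Fin h → (Fin h → ℂ) → ℂ)
    (hψ : DifferentiableOn ℂ ψ Ω) (hα : ∀ i, DifferentiableOn ℂ (α i) Ω) :
    (∀ z ∈ Ω, ∀ j : Fin h,
        symp (omg ψ α z) (fderiv ℂ (omg ψ α) z (Pi.single j 1)) = 0) ↔
      ∃ φ : (Fin h → ℂ) → ℂ, DifferentiableOn ℂ φ Ω ∧
        (∀ i, ∀ z ∈ Ω, α i z = (1 / 2) * fderiv ℂ φ z (Pi.single i 1)) ∧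
        (∀ z ∈ Ω,
          ψ z = φ z - (1 / 2) * ∑ i, z i * fderiv ℂ φ z (Pi.single i 1)) := by
  have hψ' : ∀ z ∈ Ω, DifferentiableAt ℂ ψ z := fun z hz =>
    (hψ z hz).differentiableAt (hΩ.mem_nhds hz)
  have hα' : ∀ z ∈ Ω, ∀ i, DifferentiableAt ℂ (α i) z := fun z hz i =>
    (hα i z hz).differentiableAt (hΩ.mem_nhds hz)
  have key : (∀ z ∈ Ω, ∀ j : Fin h,
      symp (omg ψ α z) (fderiv ℂ (omg ψ α) z (Pi.single j 1)) = 0) ↔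
      ∀ z ∈ Ω, ∀ j : Fin h, fderiv ℂ ψ z (Pi.single j 1) =
        α j z - ∑ i, z i * fderiv ℂ (α i) z (Pi.single j 1) := by
    constructor <;> intro H z hz j <;>
      have := H z hz j <;>
      rw [symp_omg ψ α z (hψ' z hz) (hα' z hz)] at * <;> linear_combination -this
  rw [key]
  constructor
  · intro H
    refine ⟨fun z => ψ z + ∑ i, z i * α i z, ?_, ?_, ?_⟩
    · exact hψ.add (DifferentiableOn.fun_sum fun i _ =>
        ((ContinuousLinearMap.proj i).differentiable.differentiableOn).mul (hα i))
    · intro i z hz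
      rw [phi_fderiv ψ α z (hψ' z hz) (hα' z hz) i, H z hz i]
      ring
    · intro z hz
      have e : ∀ j : Fin h, fderiv ℂ (fun z => ψ z + ∑ i, z i * α i z) z (Pi.single j 1)
          = 2 * α j z := by
        intro j
        rw [phi_fderiv ψ α z (hψ' z hz) (hα' z hz) j, H z hz j]; ring
      simp only [e]
      have e2 : ∑ i, z i * (2 * α i z) = 2 * ∑ i, z i * α i z := by
        rw [Finset.mul_sum]
        exact Finset.sum_congr rfl fun i _ => by ring
      rw [e2]; ring
  · rintro ⟨φ, hφ, h1, h2⟩ z hz j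
    have hφ' : DifferentiableAt ℂ φ z := (hφ z hz).differentiableAt (hΩ.mem_nhds hz)
    have heq : ψ =ᶠ[nhds z] fun w => φ w - ∑ i, w i * α i w := by
      filter_upwards [hΩ.mem_nhds hz] with w hw
      rw [h2 w hw]
      congr 1
      rw [Finset.mul_sum]
      exact Finset.sum_congr rfl fun i _ => by rw [h1 i w hw]; ring
    have hs : DifferentiableAt ℂ (fun w : Fin h → ℂ => ∑ i, w i * α i w) z :=
      DifferentiableAt.fun_sum fun i _ => ((hasFDerivAt_apply i z).differentiableAt).mul
        (hα' z hz i)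
    rw [heq.fderiv_eq, fderiv_fun_sub hφ' hs, ContinuousLinearMap.sub_apply,
      sumprod_fderiv α z (hα' z hz) j]
    have : fderiv ℂ φ z (Pi.single j 1) = 2 * α j z := by
      rw [h1 j z hz]; ring
    rw [this]; ring
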